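/- Let M be an n×n real matrix that is (κ₀,γ₀)-strongly stable, let K be a real m×n matrix with ‖K‖ ≤ κ₀, let Q be a symmetric n×n matrix and R a symmetric m×m matrix with 0 ⪯ Q ⪯ α₁·I and 0 ⪯ R ⪯ α₁·I for some α₁ > 0, and let P be a symmetric n×n matrix satisfying the Lyapunov equation P = Q + KᵀRK + MᵀPM. Then P ⪯ (κ₀²/γ₀)·α₁·(1+κ₀²)·I, and hence tr(P) ≤ (n+m)·(κ₀²/γ₀)·α₁·(1+κ₀²). -/

import Mathlib

open Matrix Finset
open scoped Matrix.Norms.L2Operator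

private lemma dot_eq_inner {k : ℕ} (a b : Fin k → ℝ) :
    a ⬝ᵥ b = inner ℝ ((WithLp.equiv 2 (Fin k → ℝ)).symm a) ((WithLp.equiv 2 (Fin k → ℝ)).symm b) := by
  simp [PiLp.inner_apply, RCLike.inner_apply, dotProduct, mul_comm]

private lemma dot_self_eq_norm_sq {k : ℕ} (x : Fin k → ℝ) :
    x ⬝ᵥ x = ‖(WithLp.equiv 2 (Fin k → ℝ)).symm x‖ ^ 2 := by
  rw [dot_eq_inner, real_inner_self_eq_norm_sq]

private lemma quad_le_of_psd {k : ℕ} {A : Matrix (Fin k) (Fin k) ℝ} {α : ℝ}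
    (h : (α • (1 : Matrix (Fin k) (Fin k) ℝ) - A).PosSemidef) (x : Fin k → ℝ) :
    x ⬝ᵥ (A *ᵥ x) ≤ α * (x ⬝ᵥ x) := by
  have h2 := h.dotProduct_mulVec_nonneg x
  simp only [star_trivial, sub_mulVec, smul_mulVec, one_mulVec, dotProduct_sub,
    dotProduct_smul, smul_eq_mul] at h2
  linarith

private lemma quad_le_norm {k : ℕ} (A : Matrix (Fin k) (Fin k) ℝ) (x : Fin k → ℝ) :
    x ⬝ᵥ (A *ᵥ x) ≤ ‖A‖ * (x ⬝ᵥ x) := by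
  rw [dot_eq_inner, dot_self_eq_norm_sq]
  calc inner ℝ ((WithLp.equiv 2 (Fin k → ℝ)).symm x) ((WithLp.equiv 2 (Fin k → ℝ)).symm (A *ᵥ x))
      ≤ ‖(WithLp.equiv 2 (Fin k → ℝ)).symm x‖ * ‖(WithLp.equiv 2 (Fin k → ℝ)).symm (A *ᵥ x)‖ :=
        real_inner_le_norm _ _
    _ ≤ ‖(WithLp.equiv 2 (Fin k → ℝ)).symm x‖ * (‖A‖ * ‖(WithLp.equiv 2 (Fin k → ℝ)).symm x‖) := by
        have h1 : ‖(WithLp.equiv 2 (Fin k → ℝ)).symm (A *ᵥ x)‖ ≤ ‖A‖ * ‖(WithLp.equiv 2 (Fin k → ℝ)).symm x‖ :=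
          A.l2_opNorm_mulVec ((WithLp.equiv 2 (Fin k → ℝ)).symm x)
        exact mul_le_mul_of_nonneg_left h1 (norm_nonneg _)
    _ = ‖A‖ * ‖(WithLp.equiv 2 (Fin k → ℝ)).symm x‖ ^ 2 := by ring

private lemma mulVec_dot_self_le {k l : ℕ} (A : Matrix (Fin k) (Fin l) ℝ) {κ : ℝ}
    (hA : ‖A‖ ≤ κ) (hκ : 0 ≤ κ) (x : Fin l → ℝ) :
    (A *ᵥ x) ⬝ᵥ (A *ᵥ x) ≤ κ ^ 2 * (x ⬝ᵥ x) := by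
  rw [dot_self_eq_norm_sq, dot_self_eq_norm_sq]
  have h1 : ‖(WithLp.equiv 2 (Fin k → ℝ)).symm (A *ᵥ x)‖ ≤ ‖A‖ * ‖(WithLp.equiv 2 (Fin l → ℝ)).symm x‖ :=
    A.l2_opNorm_mulVec ((WithLp.equiv 2 (Fin l → ℝ)).symm x)
  have h2 : ‖(WithLp.equiv 2 (Fin k → ℝ)).symm (A *ᵥ x)‖ ≤ κ * ‖(WithLp.equiv 2 (Fin l → ℝ)).symm x‖ := by
    refine h1.trans ?_
    exact mul_le_mul_of_nonneg_right hA (norm_nonneg _)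
  nlinarith [norm_nonneg ((WithLp.equiv 2 (Fin k → ℝ)).symm (A *ᵥ x)),
    norm_nonneg ((WithLp.equiv 2 (Fin l → ℝ)).symm x)]

/-- A real square matrix `M` is `(κ,γ)`-strongly stable if there exist an invertible `H`
and an `L` with `M = H L H⁻¹`, `‖L‖ ≤ 1 − γ` and `‖H‖·‖H⁻¹‖ ≤ κ`
(spectral norms). -/
def StronglyStable {n : ℕ} (M : Matrix (Fin n) (Fin n) ℝ) (κ γ : ℝ) : Prop :=
  ∃ H L : Matrix (Fin n) (Fin n) ℝ,
    IsUnit H.det ∧ M = H * L * H⁻¹ ∧ ‖L‖ ≤ 1 - γ ∧ ‖H‖ * ‖H⁻¹‖ ≤ κ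

/-- If `M` is `(κ₀,γ₀)`-strongly stable, `‖K‖ ≤ κ₀`, `0 ⪯ Q, R ⪯ α₁·I`, and `P` solves
the Lyapunov equation `P = Q + KᵀRK + MᵀPM`, then `P ⪯ (κ₀²/γ₀)·α₁·(1+κ₀²)·I` and hence
`tr P ≤ (n+m)·(κ₀²/γ₀)·α₁·(1+κ₀²)`. -/
theorem lyapunov_solution_loewner_bound {n m : ℕ}
    (M : Matrix (Fin n) (Fin n) ℝ) (K : Matrix (Fin m) (Fin n) ℝ)
    (Q P : Matrix (Fin n) (Fin n) ℝ) (R : Matrix (Fin m) (Fin m) ℝ)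
    (κ₀ γ₀ α₁ : ℝ) (hκ₀ : 0 < κ₀) (hγ₀0 : 0 < γ₀) (hγ₀1 : γ₀ < 1) (hα₁ : 0 < α₁)
    (hM : StronglyStable M κ₀ γ₀) (hK : ‖K‖ ≤ κ₀)
    (hQsymm : Q.IsSymm) (hRsymm : R.IsSymm) (hPsymm : P.IsSymm)
    (hQ0 : Q.PosSemidef) (hQ1 : (α₁ • (1 : Matrix (Fin n) (Fin n) ℝ) - Q).PosSemidef)
    (hR0 : R.PosSemidef) (hR1 : (α₁ • (1 : Matrix (Fin m) (Fin m) ℝ) - R).PosSemidef)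
    (hLyap : P = Q + Kᵀ * R * K + Mᵀ * P * M) :
    ((κ₀ ^ 2 / γ₀ * α₁ * (1 + κ₀ ^ 2)) • (1 : Matrix (Fin n) (Fin n) ℝ) - P).PosSemidef ∧
      P.trace ≤ (n + m : ℝ) * (κ₀ ^ 2 / γ₀) * α₁ * (1 + κ₀ ^ 2) := by
  obtain ⟨H, L, hHdet, hMHL, hL, hH⟩ := hM
  set c : ℝ := κ₀ ^ 2 / γ₀ * α₁ * (1 + κ₀ ^ 2) with hc
  set r : ℝ := (1 - γ₀) ^ 2 with hrdef
  have hγle : 0 ≤ 1 - γ₀ := by linarith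
  have hr0 : 0 ≤ r := sq_nonneg _
  have hr1 : r < 1 := by nlinarith
  have h1r : γ₀ ≤ 1 - r := by nlinarith
  -- powers of M
  have hMpow : ∀ t : ℕ, M ^ t = H * L ^ t * H⁻¹ := by
    intro t
    induction t with
    | zero => simp [Matrix.mul_nonsing_inv H hHdet]
    | succ t ih =>
        rw [pow_succ, ih, hMHL, pow_succ]
        simp only [Matrix.mul_assoc, Matrix.nonsing_inv_mul_cancel_left H _ hHdet]
  have hnorm1 : ‖(1 : Matrix (Fin n) (Fin n) ℝ)‖ ≤ 1 := by
    rw [Matrix.cstar_norm_def, _root_.map_one]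
    exact ContinuousLinearMap.norm_id_le
  have hLpow : ∀ t : ℕ, ‖L ^ t‖ ≤ (1 - γ₀) ^ t := by
    intro t
    induction t with
    | zero => simpa using hnorm1
    | succ t ih =>
        rw [pow_succ, pow_succ]
        refine (Matrix.l2_opNorm_mul _ _).trans ?_
        exact mul_le_mul ih hL (norm_nonneg _) (pow_nonneg hγle t)
  have hMt : ∀ t : ℕ, ‖M ^ t‖ ≤ κ₀ * (1 - γ₀) ^ t := by
    intro t
    rw [hMpow t]
    have h1 : ‖H * L ^ t * H⁻¹‖ ≤ ‖H‖ * ‖L ^ t‖ * ‖H⁻¹‖ := by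
      refine (Matrix.l2_opNorm_mul _ _).trans ?_
      exact mul_le_mul_of_nonneg_right (Matrix.l2_opNorm_mul _ _) (norm_nonneg _)
    have := hLpow t
    nlinarith [norm_nonneg H, norm_nonneg H⁻¹, norm_nonneg (L ^ t), pow_nonneg hγle t,
      mul_nonneg (norm_nonneg H) (norm_nonneg H⁻¹)]
  -- one step of the Lyapunov recursion on quadratic forms
  have hstep : ∀ y : Fin n → ℝ, y ⬝ᵥ (P *ᵥ y) =
      y ⬝ᵥ (Q *ᵥ y) + (K *ᵥ y) ⬝ᵥ (R *ᵥ (K *ᵥ y)) + (M *ᵥ y) ⬝ᵥ (P *ᵥ (M *ᵥ y)) := by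
    intro y
    conv_lhs => rw [hLyap]
    simp only [Matrix.add_mulVec, dotProduct_add, ← Matrix.mulVec_mulVec]
    rw [Matrix.dotProduct_mulVec y Kᵀ, Matrix.vecMul_transpose,
      Matrix.dotProduct_mulVec y Mᵀ, Matrix.vecMul_transpose]
  -- iterated expansion
  have hexp : ∀ (x : Fin n → ℝ) (T : ℕ), x ⬝ᵥ (P *ᵥ x) =
      (∑ t ∈ Finset.range T, ((M ^ t *ᵥ x) ⬝ᵥ (Q *ᵥ (M ^ t *ᵥ x)) +
        (K *ᵥ (M ^ t *ᵥ x)) ⬝ᵥ (R *ᵥ (K *ᵥ (M ^ t *ᵥ x))))) +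
      (M ^ T *ᵥ x) ⬝ᵥ (P *ᵥ (M ^ T *ᵥ x)) := by
    intro x T
    induction T with
    | zero => simp
    | succ T ih =>
        rw [Finset.sum_range_succ, ih, hstep (M ^ T *ᵥ x)]
        rw [pow_succ', ← Matrix.mulVec_mulVec]
        ring
  -- per-term bound
  have hterm : ∀ (x : Fin n → ℝ) (t : ℕ),
      (M ^ t *ᵥ x) ⬝ᵥ (Q *ᵥ (M ^ t *ᵥ x)) +
        (K *ᵥ (M ^ t *ᵥ x)) ⬝ᵥ (R *ᵥ (K *ᵥ (M ^ t *ᵥ x))) ≤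
      α₁ * (1 + κ₀ ^ 2) * (κ₀ ^ 2 * (r ^ t * (x ⬝ᵥ x))) := by
    intro x t
    set y := M ^ t *ᵥ x with hy
    have hyy : y ⬝ᵥ y ≤ κ₀ ^ 2 * (r ^ t * (x ⬝ᵥ x)) := by
      have h1 := mulVec_dot_self_le (M ^ t) (hMt t)
        (mul_nonneg hκ₀.le (pow_nonneg hγle t)) x
      have h2 : (κ₀ * (1 - γ₀) ^ t) ^ 2 = κ₀ ^ 2 * r ^ t := by
        rw [hrdef, mul_pow, ← pow_mul, ← pow_mul, Nat.mul_comm]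
      rw [h2] at h1
      linarith [h1]
    have hyy0 : (0:ℝ) ≤ y ⬝ᵥ y := by
      rw [dot_self_eq_norm_sq]; positivity
    have hQy := quad_le_of_psd hQ1 y
    have hRy := quad_le_of_psd hR1 (K *ᵥ y)
    have hKy := mulVec_dot_self_le K hK hκ₀.le y
    have e1 : α₁ * (y ⬝ᵥ y) ≤ α₁ * (κ₀ ^ 2 * (r ^ t * (x ⬝ᵥ x))) :=
      mul_le_mul_of_nonneg_left hyy hα₁.le
    have e2 : α₁ * ((K *ᵥ y) ⬝ᵥ (K *ᵥ y)) ≤ α₁ * (κ₀ ^ 2 * (y ⬝ᵥ y)) :=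
      mul_le_mul_of_nonneg_left hKy hα₁.le
    have e3 : α₁ * (κ₀ ^ 2 * (y ⬝ᵥ y)) ≤ α₁ * (κ₀ ^ 2 * (κ₀ ^ 2 * (r ^ t * (x ⬝ᵥ x)))) := by
      have h := mul_le_mul_of_nonneg_left hyy (sq_nonneg κ₀)
      exact mul_le_mul_of_nonneg_left h hα₁.le
    linarith [e1, e2, e3, hQy, hRy]
  -- geometric sum bound
  have hgeom : ∀ T : ℕ, (∑ t ∈ Finset.range T, r ^ t) ≤ 1 / γ₀ := by
    intro T
    have h1 : (∑ t ∈ Finset.range T, r ^ t) * (1 - r) = 1 - r ^ T := by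
      have := geom_sum_mul r T
      have h2 : (∑ t ∈ Finset.range T, r ^ t) * (1 - r) = -((∑ t ∈ Finset.range T, r ^ t) * (r - 1)) := by ring
      rw [h2, this]; ring
    have hrT : (0:ℝ) ≤ r ^ T := pow_nonneg hr0 T
    have h1r0 : 0 < 1 - r := by linarith
    rw [le_div_iff₀ hγ₀0]
    nlinarith [Finset.sum_nonneg (fun t _ => pow_nonneg hr0 t : ∀ t ∈ Finset.range T, (0:ℝ) ≤ r ^ t)]
  -- main quadratic-form bound
  have hmain : ∀ x : Fin n → ℝ, x ⬝ᵥ (P *ᵥ x) ≤ c * (x ⬝ᵥ x) := by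
    intro x
    have hxx0 : (0:ℝ) ≤ x ⬝ᵥ x := by rw [dot_self_eq_norm_sq]; positivity
    refine le_of_forall_pos_le_add ?_
    intro ε hε
    set D : ℝ := ‖P‖ * (κ₀ ^ 2 * (x ⬝ᵥ x)) with hD
    have hD0 : 0 ≤ D := by positivity
    obtain ⟨T, hT⟩ : ∃ T : ℕ, D * r ^ T ≤ ε := by
      rcases eq_or_lt_of_le hD0 with h | h
      · exact ⟨0, by simp [← h]; linarith⟩
      · obtain ⟨T, hT⟩ := exists_pow_lt_of_lt_one (div_pos hε h) hr1
        exact ⟨T, by rw [mul_comm]; exact le_of_lt ((lt_div_iff₀ h).mp hT)⟩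
    rw [hexp x T]
    have hsum : (∑ t ∈ Finset.range T, ((M ^ t *ᵥ x) ⬝ᵥ (Q *ᵥ (M ^ t *ᵥ x)) +
        (K *ᵥ (M ^ t *ᵥ x)) ⬝ᵥ (R *ᵥ (K *ᵥ (M ^ t *ᵥ x))))) ≤ c * (x ⬝ᵥ x) := by
      calc (∑ t ∈ Finset.range T, ((M ^ t *ᵥ x) ⬝ᵥ (Q *ᵥ (M ^ t *ᵥ x)) +
            (K *ᵥ (M ^ t *ᵥ x)) ⬝ᵥ (R *ᵥ (K *ᵥ (M ^ t *ᵥ x)))))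
          ≤ ∑ t ∈ Finset.range T, α₁ * (1 + κ₀ ^ 2) * (κ₀ ^ 2 * (r ^ t * (x ⬝ᵥ x))) :=
            Finset.sum_le_sum (fun t _ => hterm x t)
        _ = α₁ * (1 + κ₀ ^ 2) * κ₀ ^ 2 * (x ⬝ᵥ x) * (∑ t ∈ Finset.range T, r ^ t) := by
            rw [Finset.mul_sum]; exact Finset.sum_congr rfl (fun t _ => by ring)
        _ ≤ c * (x ⬝ᵥ x) := by
            have := hgeom T
            have hnn : 0 ≤ α₁ * (1 + κ₀ ^ 2) * κ₀ ^ 2 * (x ⬝ᵥ x) := by positivity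
            calc α₁ * (1 + κ₀ ^ 2) * κ₀ ^ 2 * (x ⬝ᵥ x) * (∑ t ∈ Finset.range T, r ^ t)
                ≤ α₁ * (1 + κ₀ ^ 2) * κ₀ ^ 2 * (x ⬝ᵥ x) * (1 / γ₀) :=
                  mul_le_mul_of_nonneg_left this hnn
              _ = c * (x ⬝ᵥ x) := by rw [hc]; ring
    have hrem : (M ^ T *ᵥ x) ⬝ᵥ (P *ᵥ (M ^ T *ᵥ x)) ≤ ε := by
      have h1 := quad_le_norm P (M ^ T *ᵥ x)
      have h2 : (M ^ T *ᵥ x) ⬝ᵥ (M ^ T *ᵥ x) ≤ κ₀ ^ 2 * (r ^ T * (x ⬝ᵥ x)) := by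
        have h3 := mulVec_dot_self_le (M ^ T) (hMt T)
          (mul_nonneg hκ₀.le (pow_nonneg hγle T)) x
        have h4 : (κ₀ * (1 - γ₀) ^ T) ^ 2 = κ₀ ^ 2 * r ^ T := by
          rw [hrdef, mul_pow, ← pow_mul, ← pow_mul, Nat.mul_comm]
        rw [h4] at h3
        linarith [h3]
      have hP0 : (0:ℝ) ≤ ‖P‖ := norm_nonneg _
      have : ‖P‖ * ((M ^ T *ᵥ x) ⬝ᵥ (M ^ T *ᵥ x)) ≤ D * r ^ T := by
        rw [hD]
        nlinarith
      linarith
    linarith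
  have hc0 : 0 ≤ c := by rw [hc]; positivity
  have hpsd : ((κ₀ ^ 2 / γ₀ * α₁ * (1 + κ₀ ^ 2)) • (1 : Matrix (Fin n) (Fin n) ℝ) - P).PosSemidef := by
    refine Matrix.PosSemidef.of_dotProduct_mulVec_nonneg ?_ ?_
    · have hP : Pᴴ = P := hPsymm
      show (c • (1 : Matrix (Fin n) (Fin n) ℝ) - P)ᴴ = _
      simp [hP]
      exact congrArg (fun X => c • (1 : Matrix (Fin n) (Fin n) ℝ) - X) hPsymm.eq
    · intro x
      have h := hmain x
      rw [hc] at h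
      simp only [star_trivial, Matrix.sub_mulVec, Matrix.smul_mulVec, Matrix.one_mulVec,
        dotProduct_sub, dotProduct_smul, smul_eq_mul]
      linarith
  refine ⟨hpsd, ?_⟩
  have hdiag : ∀ i : Fin n, P i i ≤ c := by
    intro i
    have h1 := hmain (Pi.single i 1)
    have h2 : (Pi.single i 1 : Fin n → ℝ) ⬝ᵥ (P *ᵥ Pi.single i 1) = P i i := by
      simp [dotProduct, mulVec, Pi.single_apply, Finset.sum_ite_eq]
    have h3 : (Pi.single i 1 : Fin n → ℝ) ⬝ᵥ Pi.single i 1 = 1 := by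
      simp [dotProduct, Pi.single_apply]
    rw [h2, h3, mul_one] at h1
    exact h1
  have htr : P.trace ≤ n * c := by
    rw [Matrix.trace]
    calc (∑ i, P.diag i) ≤ ∑ _i : Fin n, c := Finset.sum_le_sum (fun i _ => hdiag i)
      _ = n * c := by simp [mul_comm]
  calc P.trace ≤ n * c := htr
    _ ≤ (n + m : ℝ) * c := by
        exact mul_le_mul_of_nonneg_right (le_add_of_nonneg_right (Nat.cast_nonneg m)) hc0
    _ = (n + m : ℝ) * (κ₀ ^ 2 / γ₀) * α₁ * (1 + κ₀ ^ 2) := by rw [hc]; ring
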